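/- The sum of two special nilpotent ideals of a compatible Lie algebra L is again a special nilpotent ideal of L. -/

import Mathlib

open Submodule Module

section Defs
variable (K : Type*) [Field K] {g : Type*} [AddCommGroup g] [Module K g]

def IsBilin (b : g → g → g) : Prop :=
  (∀ x y z : g, b (x + y) z = b x z + b y z) ∧
  (∀ x y z : g, b x (y + z) = b x y + b x z) ∧
  (∀ (c : K) (x y : g), b (c • x) y = c • b x y) ∧
  (∀ (c : K) (x y : g), b x (c • y) = c • b x y)

def IsSkew {g : Type*} [AddCommGroup g] (b : g → g → g) : Prop :=
  ∀ x y, b x y = - b y x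

def JacId {g : Type*} [AddCommGroup g] (b : g → g → g) : Prop :=
  ∀ x y z, b (b x y) z + b (b y z) x + b (b z x) y = 0

def MixedJac {g : Type*} [AddCommGroup g] (b1 b2 : g → g → g) : Prop :=
  ∀ x y z, b2 (b1 x y) z + b2 (b1 y z) x + b2 (b1 z x) y
    + b1 (b2 x y) z + b1 (b2 y z) x + b1 (b2 z x) y = 0

def brSpan (b : g → g → g) (S T : Submodule K g) : Submodule K g :=
  Submodule.span K {z | ∃ s ∈ S, ∃ t ∈ T, z = b s t}

def brSpan2 (b1 b2 : g → g → g) (S T : Submodule K g) : Submodule K g :=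
  brSpan K b1 S T ⊔ brSpan K b2 S T

def lcs2 (b1 b2 : g → g → g) (I : Submodule K g) : ℕ → Submodule K g
  | 0 => I
  | k + 1 => brSpan2 K b1 b2 I (lcs2 b1 b2 I k)

def der2 (b1 b2 : g → g → g) : ℕ → Submodule K g
  | 0 => ⊤
  | k + 1 => brSpan2 K b1 b2 (der2 b1 b2 k) (der2 b1 b2 k)

def IsIdeal (b1 b2 : g → g → g) (I : Submodule K g) : Prop :=
  ∀ x ∈ I, ∀ y : g, b1 x y ∈ I ∧ b2 x y ∈ I

def IsCLA (b1 b2 : g → g → g) : Prop :=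
  IsBilin K b1 ∧ IsSkew b1 ∧ JacId b1 ∧
  IsBilin K b2 ∧ IsSkew b2 ∧ JacId b2 ∧ MixedJac b1 b2

end Defs

/-- An ideal `I` is special if `[[I,J]]` is an ideal for every ideal `J`. -/
def IsSpecialIdeal {K : Type*} [Field K] {g : Type*} [AddCommGroup g] [Module K g]
    (b1 b2 : g → g → g) (I : Submodule K g) : Prop :=
  IsIdeal K b1 b2 I ∧ ∀ J : Submodule K g, IsIdeal K b1 b2 J →
    IsIdeal K b1 b2 (brSpan2 K b1 b2 I J)

section Aux
variable {K : Type*} [Field K] {g : Type*} [AddCommGroup g] [Module K g]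
variable {b1 b2 : g → g → g}

lemma brSpan_le {b : g → g → g} {S T U : Submodule K g}
    (h : ∀ s ∈ S, ∀ t ∈ T, b s t ∈ U) : brSpan K b S T ≤ U := by
  rw [brSpan, Submodule.span_le]
  rintro z ⟨s, hs, t, ht, rfl⟩
  exact h s hs t ht

lemma mem_brSpan {b : g → g → g} {S T : Submodule K g} {s t : g}
    (hs : s ∈ S) (ht : t ∈ T) : b s t ∈ brSpan K b S T :=
  Submodule.subset_span ⟨s, hs, t, ht, rfl⟩

lemma brSpan_mono {b : g → g → g} {S S' T T' : Submodule K g} (h1 : S ≤ S') (h2 : T ≤ T') :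
    brSpan K b S T ≤ brSpan K b S' T' :=
  brSpan_le fun s hs t ht => mem_brSpan (h1 hs) (h2 ht)

lemma brSpan2_mono {S S' T T' : Submodule K g} (h1 : S ≤ S') (h2 : T ≤ T') :
    brSpan2 K b1 b2 S T ≤ brSpan2 K b1 b2 S' T' :=
  sup_le_sup (brSpan_mono h1 h2) (brSpan_mono h1 h2)

lemma isIdeal_sup (hb1 : IsBilin K b1) (hb2 : IsBilin K b2) {I J : Submodule K g}
    (hI : IsIdeal K b1 b2 I) (hJ : IsIdeal K b1 b2 J) : IsIdeal K b1 b2 (I ⊔ J) := by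
  intro x hx y
  rcases Submodule.mem_sup.mp hx with ⟨a, ha, c, hc, rfl⟩
  constructor
  · rw [hb1.1]; exact Submodule.add_mem_sup (hI a ha y).1 (hJ c hc y).1
  · rw [hb2.1]; exact Submodule.add_mem_sup (hI a ha y).2 (hJ c hc y).2

lemma brSpan2_le_left {I S : Submodule K g} (hI : IsIdeal K b1 b2 I) :
    brSpan2 K b1 b2 I S ≤ I :=
  sup_le (brSpan_le fun s hs t _ => (hI s hs t).1) (brSpan_le fun s hs t _ => (hI s hs t).2)

lemma brSpan2_le_right (hs1 : IsSkew b1) (hs2 : IsSkew b2) {S N : Submodule K g}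
    (hN : IsIdeal K b1 b2 N) : brSpan2 K b1 b2 S N ≤ N := by
  refine sup_le (brSpan_le ?_) (brSpan_le ?_)
  · intro s _ t ht; rw [hs1 s t]; exact N.neg_mem (hN t ht s).1
  · intro s _ t ht; rw [hs2 s t]; exact N.neg_mem (hN t ht s).2

lemma lcs2_isIdeal {I : Submodule K g} (hI : IsSpecialIdeal b1 b2 I) (k : ℕ) :
    IsIdeal K b1 b2 (lcs2 K b1 b2 I k) := by
  induction k with
  | zero => exact hI.1
  | succ k ih => exact hI.2 _ ih

lemma lcs2_antitone (hs1 : IsSkew b1) (hs2 : IsSkew b2) {I : Submodule K g}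
    (hI : IsSpecialIdeal b1 b2 I) {s m : ℕ} (h : s ≤ m) :
    lcs2 K b1 b2 I m ≤ lcs2 K b1 b2 I s := by
  induction m with
  | zero => simpa [Nat.le_zero.mp h] using le_refl _
  | succ m ih =>
    rcases Nat.lt_or_ge s (m+1) with hlt | hge
    · exact le_trans (brSpan2_le_right hs1 hs2 (lcs2_isIdeal hI m)) (ih (Nat.lt_succ_iff.mp hlt))
    · have : s = m + 1 := le_antisymm h hge
      simp [this]

lemma brSpan_sup_left {b : g → g → g} (hb : IsBilin K b) {S1 S2 T : Submodule K g} :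
    brSpan K b (S1 ⊔ S2) T ≤ brSpan K b S1 T ⊔ brSpan K b S2 T :=
  brSpan_le fun s hs t ht => by
    rcases Submodule.mem_sup.mp hs with ⟨a, ha, c, hc, rfl⟩
    rw [hb.1]
    exact Submodule.add_mem_sup (mem_brSpan ha ht) (mem_brSpan hc ht)

lemma brSpan2_sup_left (hb1 : IsBilin K b1) (hb2 : IsBilin K b2) {S1 S2 T : Submodule K g} :
    brSpan2 K b1 b2 (S1 ⊔ S2) T ≤ brSpan2 K b1 b2 S1 T ⊔ brSpan2 K b1 b2 S2 T := by
  refine sup_le (le_trans (brSpan_sup_left hb1) ?_) (le_trans (brSpan_sup_left hb2) ?_)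
  · exact sup_le_sup le_sup_left le_sup_left
  · exact sup_le_sup le_sup_right le_sup_right

lemma brSpan_sSup_le {b : g → g → g} (hb : IsBilin K b) {S : Submodule K g}
    {𝒮 : Set (Submodule K g)} :
    brSpan K b S (sSup 𝒮) ≤ ⨆ N ∈ 𝒮, brSpan K b S N := by
  have h0 : ∀ s : g, b s 0 = 0 := fun s => by
    have := hb.2.2.2 (0 : K) s 0; simpa using this
  refine brSpan_le fun s hs t ht => ?_
  rw [sSup_eq_iSup'] at ht
  refine Submodule.iSup_induction (motive := fun t => b s t ∈ ⨆ N ∈ 𝒮, brSpan K b S N)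
    (fun N : 𝒮 => (N : Submodule K g)) ht ?_ ?_ ?_
  · rintro ⟨N, hN⟩ x hx
    have hle : brSpan K b S N ≤ ⨆ N ∈ 𝒮, brSpan K b S N := le_iSup₂_of_le N hN le_rfl
    exact hle (mem_brSpan hs hx)
  · simp [h0]
  · intro x y hx hy
    rw [hb.2.1]
    exact Submodule.add_mem _ hx hy

def Good (b1 b2 : g → g → g) (I1 I2 : Submodule K g) (n : ℕ) (N : Submodule K g) : Prop :=
  IsIdeal K b1 b2 N ∧ ∃ p q : ℕ, p + q = n + 1 ∧
    (p = 0 ∨ N ≤ lcs2 K b1 b2 I1 (p - 1)) ∧ (q = 0 ∨ N ≤ lcs2 K b1 b2 I2 (q - 1))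

end Aux

section Aux2
variable {K : Type*} [Field K] {g : Type*} [AddCommGroup g] [Module K g]
variable {b1 b2 : g → g → g}

lemma good_step1 (hsk1 : IsSkew b1) (hsk2 : IsSkew b2) {I1 I2 : Submodule K g}
    (hI1 : IsSpecialIdeal b1 b2 I1) {n : ℕ} {N : Submodule K g}
    (hN : Good b1 b2 I1 I2 n N) : Good b1 b2 I1 I2 (n + 1) (brSpan2 K b1 b2 I1 N) := by
  obtain ⟨hNid, p, q, hpq, hp, hq⟩ := hN
  refine ⟨hI1.2 N hNid, p + 1, q, by omega, Or.inr ?_, ?_⟩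
  · rcases p with _ | p'
    · simpa [lcs2] using brSpan2_le_left (b1 := b1) (b2 := b2) (S := N) hI1.1
    · rcases hp with h0 | hle
      · omega
      · have : brSpan2 K b1 b2 I1 N ≤ brSpan2 K b1 b2 I1 (lcs2 K b1 b2 I1 p') :=
          brSpan2_mono le_rfl (by simpa using hle)
        simpa [lcs2] using this
  · rcases hq with h0 | hle
    · exact Or.inl h0
    · exact Or.inr (le_trans (brSpan2_le_right hsk1 hsk2 hNid) hle)

lemma good_step2 (hsk1 : IsSkew b1) (hsk2 : IsSkew b2) {I1 I2 : Submodule K g}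
    (hI2 : IsSpecialIdeal b1 b2 I2) {n : ℕ} {N : Submodule K g}
    (hN : Good b1 b2 I1 I2 n N) : Good b1 b2 I1 I2 (n + 1) (brSpan2 K b1 b2 I2 N) := by
  obtain ⟨hNid, p, q, hpq, hp, hq⟩ := hN
  refine ⟨hI2.2 N hNid, p, q + 1, by omega, ?_, Or.inr ?_⟩
  · rcases hp with h0 | hle
    · exact Or.inl h0
    · exact Or.inr (le_trans (brSpan2_le_right hsk1 hsk2 hNid) hle)
  · rcases q with _ | q'
    · simpa [lcs2] using brSpan2_le_left (b1 := b1) (b2 := b2) (S := N) hI2.1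
    · rcases hq with h0 | hle
      · omega
      · have : brSpan2 K b1 b2 I2 N ≤ brSpan2 K b1 b2 I2 (lcs2 K b1 b2 I2 q') :=
          brSpan2_mono le_rfl (by simpa using hle)
        simpa [lcs2] using this

end Aux2

theorem stmt11 {K : Type*} [Field K] {g : Type*} [AddCommGroup g] [Module K g]
    (b1 b2 : g → g → g) (h : IsCLA K b1 b2) (I1 I2 : Submodule K g)
    (hI1 : IsSpecialIdeal b1 b2 I1) (hI2 : IsSpecialIdeal b1 b2 I2)
    (hn1 : ∃ s, lcs2 K b1 b2 I1 s = ⊥) (hn2 : ∃ s, lcs2 K b1 b2 I2 s = ⊥) :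
    IsSpecialIdeal b1 b2 (I1 ⊔ I2) ∧ ∃ s, lcs2 K b1 b2 (I1 ⊔ I2) s = ⊥ := by
  obtain ⟨hb1, hsk1, -, hb2, hsk2, -, -⟩ := h
  obtain ⟨s1, hs1⟩ := hn1
  obtain ⟨s2, hs2⟩ := hn2
  have hsup_eq : ∀ J : Submodule K g, brSpan2 K b1 b2 (I1 ⊔ I2) J
      = brSpan2 K b1 b2 I1 J ⊔ brSpan2 K b1 b2 I2 J := fun J =>
    le_antisymm (brSpan2_sup_left hb1 hb2)
      (sup_le (brSpan2_mono le_sup_left le_rfl) (brSpan2_mono le_sup_right le_rfl))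
  have hspecial : IsSpecialIdeal b1 b2 (I1 ⊔ I2) := by
    refine ⟨isIdeal_sup hb1 hb2 hI1.1 hI2.1, fun J hJ => ?_⟩
    rw [hsup_eq J]
    exact isIdeal_sup hb1 hb2 (hI1.2 J hJ) (hI2.2 J hJ)
  refine ⟨hspecial, s1 + s2, ?_⟩
  have key : ∀ n, lcs2 K b1 b2 (I1 ⊔ I2) n ≤ sSup {N | Good b1 b2 I1 I2 n N} := by
    intro n
    induction n with
    | zero =>
      show I1 ⊔ I2 ≤ _
      refine sup_le (le_sSup ?_) (le_sSup ?_)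
      · exact ⟨hI1.1, 1, 0, rfl, Or.inr (by simp [lcs2]), Or.inl rfl⟩
      · exact ⟨hI2.1, 0, 1, rfl, Or.inl rfl, Or.inr (by simp [lcs2])⟩
    | succ n ih =>
      show brSpan2 K b1 b2 (I1 ⊔ I2) (lcs2 K b1 b2 (I1 ⊔ I2) n) ≤ _
      refine le_trans (brSpan2_mono le_rfl ih) ?_
      have step1 : brSpan2 K b1 b2 (I1 ⊔ I2) (sSup {N | Good b1 b2 I1 I2 n N}) ≤
          ⨆ N ∈ {N | Good b1 b2 I1 I2 n N}, brSpan2 K b1 b2 (I1 ⊔ I2) N := by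
        refine sup_le (le_trans (brSpan_sSup_le hb1) ?_) (le_trans (brSpan_sSup_le hb2) ?_)
        · exact iSup₂_le fun N hN => le_iSup₂_of_le N hN le_sup_left
        · exact iSup₂_le fun N hN => le_iSup₂_of_le N hN le_sup_right
      refine le_trans step1 (iSup₂_le fun N hN => ?_)
      refine le_trans (brSpan2_sup_left hb1 hb2) (sup_le (le_sSup ?_) (le_sSup ?_))
      · exact good_step1 hsk1 hsk2 hI1 hN
      · exact good_step2 hsk1 hsk2 hI2 hN
  have hfin : lcs2 K b1 b2 (I1 ⊔ I2) (s1 + s2) ≤ ⊥ := by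
    refine le_trans (key (s1 + s2)) (sSup_le ?_)
    rintro N ⟨hNid, p, q, hpq, hp, hq⟩
    rcases Nat.lt_or_ge p (s1 + 1) with h1 | h1
    · rcases hq with h0 | hle
      · omega
      · calc N ≤ lcs2 K b1 b2 I2 (q - 1) := hle
          _ ≤ lcs2 K b1 b2 I2 s2 := lcs2_antitone hsk1 hsk2 hI2 (by omega)
          _ = ⊥ := hs2
    · rcases hp with h0 | hle
      · omega
      · calc N ≤ lcs2 K b1 b2 I1 (p - 1) := hle
          _ ≤ lcs2 K b1 b2 I1 s1 := lcs2_antitone hsk1 hsk2 hI1 (by omega)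
          _ = ⊥ := hs1
  exact le_bot_iff.mp hfin
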